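/- arXiv:1611.08143 — 2 statements merged into one kernel-verified Lean document; each statement's English description precedes it below -/
import Mathlib

section
/- Let 𝕋 be a combinatorial tree forcing with the incompatibility shrinking property. Then every maximal antichain in 𝕋 of size 𝔠 can be refined to a maximal antichain (S_α : α ∈ A), with each S_α below some element of the given antichain, such that [S_α] ∩ [S_β] = ∅ for all α ≠ β in A; in particular, 𝕋 has the disjoint maximal antichain property. -/
/-- The restriction `x↾n` of a sequence `x ∈ ω^ω` to its first `n` values, as a finite sequence. -/
def seqRestrict (x : ℕ → ℕ) (n : ℕ) : List ℕ := List.ofFn fun i : Fin n => x i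

/-- A tree on `ω`: a nonempty set of finite sequences closed under initial segments. -/
def IsSeqTree (T : Set (List ℕ)) : Prop :=
  T.Nonempty ∧ ∀ s ∈ T, ∀ t : List ℕ, t <+: s → t ∈ T

/-- `[T]`, the set of branches of a tree `T ⊆ ω^{<ω}`. -/
def branches (T : Set (List ℕ)) : Set (ℕ → ℕ) := {x | ∀ n : ℕ, seqRestrict x n ∈ T}

/-- `S` and `T` are compatible in `𝕋` (ordered by inclusion) if they have a common extension. -/
def Compat (𝕋 : Set (Set (List ℕ))) (S T : Set (List ℕ)) : Prop :=
  ∃ R ∈ 𝕋, R ⊆ S ∧ R ⊆ T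

/-- A combinatorial tree forcing: a collection `𝕋` of trees on `ω` containing the full tree,
closed under restrictions `T_s`, with large disjoint antichains, and homogeneous. -/
structure CombTreeForcing (𝕋 : Set (Set (List ℕ))) : Prop where
  /-- every member of `𝕋` is a tree -/
  isTree : ∀ T ∈ 𝕋, IsSeqTree T
  /-- (1) `ω^{<ω} ∈ 𝕋` -/
  univ_mem : (Set.univ : Set (List ℕ)) ∈ 𝕋
  /-- (2) closure under subtrees `T_s` -/
  restrict_mem : ∀ T ∈ 𝕋, ∀ s ∈ T, {t ∈ T | s <+: t ∨ t <+: s} ∈ 𝕋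
  /-- (3) large disjoint antichains: a continuous `f : ω^ω → 2^ω` all of whose fibers are
  branch sets of trees in `𝕋` -/
  large_disjoint : ∃ f : (ℕ → ℕ) → (ℕ → Bool), Continuous f ∧
      ∀ x : ℕ → Bool, ∃ T ∈ 𝕋, f ⁻¹' {x} = branches T
  /-- (4) homogeneity: below every `T ∈ 𝕋` there is an order-preserving injective copy
  `i : ω^{<ω} → T` of the full tree inducing a homeomorphism `g : ω^ω → [T]`,
  `g(x) = ⋃_n i(x↾n)`, such that `S ∈ 𝕋` iff the downward closure of `i''S` is in `𝕋`. -/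
  homogeneity : ∀ T ∈ 𝕋, ∃ i : List ℕ → List ℕ,
      Function.Injective i ∧ (∀ s t : List ℕ, s <+: t → i s <+: i t) ∧
      (∀ s : List ℕ, i s ∈ T) ∧
      ∃ g : (ℕ → ℕ) → (ℕ → ℕ),
        (∀ (x : ℕ → ℕ) (n : ℕ),
          i (seqRestrict x n) = seqRestrict (g x) (i (seqRestrict x n)).length) ∧
        Topology.IsEmbedding g ∧ Set.range g = branches T ∧
        ∀ S : Set (List ℕ), IsSeqTree S → (S ∈ 𝕋 ↔ {t | ∃ s ∈ S, t <+: i s} ∈ 𝕋)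

/-- `𝕋` has the disjoint maximal antichain property: there is a maximal antichain
`(T_α : α < 𝔠)` in `𝕋` with `[T_α] ∩ [T_β] = ∅` for `α ≠ β`. -/
def DisjointMaxAntichainProp (𝕋 : Set (Set (List ℕ))) : Prop :=
  ∃ (ι : Type) (Tfam : ι → Set (List ℕ)),
    Cardinal.mk ι = Cardinal.continuum ∧
    (∀ a : ι, Tfam a ∈ 𝕋) ∧
    (∀ a b : ι, a ≠ b → ¬ Compat 𝕋 (Tfam a) (Tfam b)) ∧
    (∀ T ∈ 𝕋, ∃ a : ι, Compat 𝕋 T (Tfam a)) ∧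
    (∀ a b : ι, a ≠ b → branches (Tfam a) ∩ branches (Tfam b) = ∅)

/-- `𝕋` has the incompatibility shrinking property: given `T ∈ 𝕋` and fewer than continuum
many members of `𝕋` each incompatible with `T`, some `T' ≤ T` in `𝕋` has branch set disjoint
from all of their branch sets. -/
def IncompatShrinkingProp (𝕋 : Set (Set (List ℕ))) : Prop :=
  ∀ T ∈ 𝕋, ∀ (ι : Type), Cardinal.mk ι < Cardinal.continuum →
    ∀ S : ι → Set (List ℕ), (∀ a : ι, S a ∈ 𝕋) → (∀ a : ι, ¬ Compat 𝕋 T (S a)) →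
      ∃ T' ∈ 𝕋, T' ⊆ T ∧ ∀ a : ι, branches T' ∩ branches (S a) = ∅


open Classical in
noncomputable def auxF (𝕋 : Set (Set (List ℕ))) {ι : Type} (T : ι → Set (List ℕ))
    (r : Set (List ℕ) → Set (List ℕ) → Prop) (R : Set (List ℕ))
    (prev : ∀ R', r R' R → Option (Set (List ℕ))) : Option (Set (List ℕ)) :=
  if h : ∃ S', S' ∈ 𝕋 ∧ S' ⊆ R ∧ (∃ a, S' ⊆ T a) ∧
      (∀ R' (hR' : r R' R) Sb, prev R' hR' = some Sb → branches S' ∩ branches Sb = ∅) ∧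
      ¬ ∃ R', ∃ hR' : r R' R, ∃ Sb, prev R' hR' = some Sb ∧ Compat 𝕋 Sb R
  then some h.choose else none

noncomputable def auxS (𝕋 : Set (Set (List ℕ))) {ι : Type} (T : ι → Set (List ℕ))
    (r : Set (List ℕ) → Set (List ℕ) → Prop) (hwf : WellFounded r) :
    Set (List ℕ) → Option (Set (List ℕ)) :=
  hwf.fix (auxF 𝕋 T r)

theorem auxS_eq (𝕋 : Set (Set (List ℕ))) {ι : Type} (T : ι → Set (List ℕ))
    (r : Set (List ℕ) → Set (List ℕ) → Prop) (hwf : WellFounded r) (R : Set (List ℕ)) :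
    auxS 𝕋 T r hwf R = auxF 𝕋 T r R (fun R' _ => auxS 𝕋 T r hwf R') :=
  hwf.fix_eq (auxF 𝕋 T r) R

theorem auxS_spec (𝕋 : Set (Set (List ℕ))) {ι : Type} (T : ι → Set (List ℕ))
    (r : Set (List ℕ) → Set (List ℕ) → Prop) (hwf : WellFounded r) {R Sb : Set (List ℕ)}
    (h : auxS 𝕋 T r hwf R = some Sb) :
    Sb ∈ 𝕋 ∧ Sb ⊆ R ∧ (∃ a, Sb ⊆ T a) ∧
      ∀ R', r R' R → ∀ Sb', auxS 𝕋 T r hwf R' = some Sb' →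
        branches Sb ∩ branches Sb' = ∅ := by
  rw [auxS_eq, auxF] at h
  split at h
  · rename_i hex
    obtain ⟨h1, h2, h3, h4, h5⟩ := hex.choose_spec
    obtain rfl : hex.choose = Sb := Option.some.inj h
    exact ⟨h1, h2, h3, fun R' hr Sb' hS' => h4 R' hr Sb' hS'⟩
  · simp at h

theorem auxS_none (𝕋 : Set (Set (List ℕ))) {ι : Type} (T : ι → Set (List ℕ))
    (r : Set (List ℕ) → Set (List ℕ) → Prop) (hwf : WellFounded r) {R : Set (List ℕ)}
    (h : auxS 𝕋 T r hwf R = none) :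
    ¬ ∃ S', S' ∈ 𝕋 ∧ S' ⊆ R ∧ (∃ a, S' ⊆ T a) ∧
      (∀ R' (hR' : r R' R) Sb, auxS 𝕋 T r hwf R' = some Sb → branches S' ∩ branches Sb = ∅) ∧
      ¬ ∃ R', ∃ hR' : r R' R, ∃ Sb, auxS 𝕋 T r hwf R' = some Sb ∧ Compat 𝕋 Sb R := by
  rw [auxS_eq, auxF] at h
  split at h
  · simp at h
  · assumption

theorem branches_mono {S T : Set (List ℕ)} (h : S ⊆ T) : branches S ⊆ branches T :=
  fun _ hx n => h (hx n)

theorem branches_nonempty {𝕋 : Set (Set (List ℕ))} (hctf : CombTreeForcing 𝕋)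
    {R : Set (List ℕ)} (hR : R ∈ 𝕋) : (branches R).Nonempty := by
  obtain ⟨i, -, -, -, g, -, -, hrange, -⟩ := hctf.homogeneity R hR
  exact ⟨g fun _ => 0, hrange ▸ Set.mem_range_self _⟩

theorem incompat_of_disjoint {𝕋 : Set (Set (List ℕ))} (hctf : CombTreeForcing 𝕋)
    {S S' : Set (List ℕ)} (h : branches S ∩ branches S' = ∅) : ¬ Compat 𝕋 S S' := by
  rintro ⟨Q, hQ, h1, h2⟩
  obtain ⟨x, hx⟩ := branches_nonempty hctf hQ
  exact absurd h (Set.Nonempty.ne_empty ⟨x, branches_mono h1 hx, branches_mono h2 hx⟩)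

theorem compat_symm {𝕋 : Set (Set (List ℕ))} {S T : Set (List ℕ)}
    (h : Compat 𝕋 S T) : Compat 𝕋 T S := by
  obtain ⟨Q, h1, h2, h3⟩ := h; exact ⟨Q, h1, h3, h2⟩

/-- If a combinatorial tree forcing `𝕋` has the incompatibility shrinking property, then any
maximal antichain of size `𝔠` in `𝕋` can be refined to a disjoint maximal antichain (of size
`𝔠`, each member below some member of the given antichain); in particular `𝕋` has the
disjoint maximal antichain property. -/
theorem disjointMaxAntichain_of_incompatShrinking (𝕋 : Set (Set (List ℕ)))
    (hctf : CombTreeForcing 𝕋) (hshrink : IncompatShrinkingProp 𝕋)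
    (ι : Type) (T : ι → Set (List ℕ)) (hcard : Cardinal.mk ι = Cardinal.continuum)
    (hmem : ∀ a : ι, T a ∈ 𝕋)
    (hanti : ∀ a b : ι, a ≠ b → ¬ Compat 𝕋 (T a) (T b))
    (hmax : ∀ R ∈ 𝕋, ∃ a : ι, Compat 𝕋 R (T a)) :
    (∃ (κ : Type) (S : κ → Set (List ℕ)),
      Cardinal.mk κ = Cardinal.continuum ∧
      (∀ b : κ, S b ∈ 𝕋) ∧
      (∀ b : κ, ∃ a : ι, S b ⊆ T a) ∧
      (∀ b c : κ, b ≠ c → ¬ Compat 𝕋 (S b) (S c)) ∧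
      (∀ R ∈ 𝕋, ∃ b : κ, Compat 𝕋 R (S b)) ∧
      (∀ b c : κ, b ≠ c → branches (S b) ∩ branches (S c) = ∅)) ∧
    DisjointMaxAntichainProp 𝕋 := by
  classical
  obtain ⟨r, wo, hord⟩ := Cardinal.ord_eq (Set (List ℕ))
  haveI := wo
  have wfr : WellFounded r := IsWellFounded.wf
  have hW : Cardinal.mk (Set (List ℕ)) = Cardinal.continuum := by
    rw [Cardinal.mk_set, Cardinal.mk_list_eq_aleph0, Cardinal.two_power_aleph0]
  set Sf : Set (List ℕ) → Option (Set (List ℕ)) := auxS 𝕋 T r wfr with hSfdef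
  have hspec : ∀ R Sb : Set (List ℕ), Sf R = some Sb →
      Sb ∈ 𝕋 ∧ Sb ⊆ R ∧ (∃ a, Sb ⊆ T a) ∧
      ∀ R', r R' R → ∀ Sb', Sf R' = some Sb' → branches Sb ∩ branches Sb' = ∅ :=
    fun R Sb h => auxS_spec 𝕋 T r wfr h
  -- existence of a suitable tree at "live" stages
  have hex : ∀ R, R ∈ 𝕋 →
      (¬ ∃ R', ∃ _hR' : r R' R, ∃ Sb, Sf R' = some Sb ∧ Compat 𝕋 Sb R) →
      ∃ S', S' ∈ 𝕋 ∧ S' ⊆ R ∧ (∃ a, S' ⊆ T a) ∧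
        (∀ R' (hR' : r R' R) Sb, Sf R' = some Sb → branches S' ∩ branches Sb = ∅) ∧
        ¬ ∃ R', ∃ _hR' : r R' R, ∃ Sb, Sf R' = some Sb ∧ Compat 𝕋 Sb R := by
    intro R hR hnone
    obtain ⟨a, Q, hQ𝕋, hQR, hQT⟩ := hmax R hR
    have hJc : Cardinal.mk {R' : Set (List ℕ) // r R' R ∧ (Sf R').isSome}
        < Cardinal.continuum := by
      have h1 : Cardinal.mk {R' : Set (List ℕ) // r R' R ∧ (Sf R').isSome}
          ≤ Cardinal.mk {R' : Set (List ℕ) // r R' R} :=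
        Cardinal.mk_subtype_mono (fun _ hx => hx.1)
      have h2 := Cardinal.card_typein_lt (r := r) R hord
      rw [Ordinal.card_typein, hW] at h2
      exact lt_of_le_of_lt h1 h2
    set SJ : {R' : Set (List ℕ) // r R' R ∧ (Sf R').isSome} → Set (List ℕ) :=
      fun j => (Sf j.1).get j.2.2 with hSJ
    have hSJeq : ∀ j, Sf j.1 = some (SJ j) := fun j => (Option.some_get j.2.2).symm
    have hSJmem : ∀ j, SJ j ∈ 𝕋 := fun j => (hspec _ _ (hSJeq j)).1
    have hSJinc : ∀ j, ¬ Compat 𝕋 Q (SJ j) := by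
      rintro j ⟨P, hP, hPQ, hPS⟩
      exact hnone ⟨j.1, j.2.1, SJ j, hSJeq j, P, hP, hPS, hPQ.trans hQR⟩
    obtain ⟨S', hS'𝕋, hS'Q, hdisj⟩ := hshrink Q hQ𝕋 _ hJc SJ hSJmem hSJinc
    refine ⟨S', hS'𝕋, hS'Q.trans hQR, ⟨a, hS'Q.trans hQT⟩, ?_, hnone⟩
    intro R' hR' Sb hSb
    have hs : (Sf R').isSome := by rw [hSb]; rfl
    have hget : SJ ⟨R', hR', hs⟩ = Sb :=
      Option.some.inj ((Option.some_get hs).trans hSb)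
    have := hdisj ⟨R', hR', hs⟩
    rwa [hget] at this
  -- maximality: every member of 𝕋 is compatible with some chosen tree
  have hmax' : ∀ R ∈ 𝕋, ∃ R' Sb, Sf R' = some Sb ∧ Compat 𝕋 R Sb := by
    intro R hR
    cases h : Sf R with
    | some Sb =>
      obtain ⟨h1, h2, -, -⟩ := hspec _ _ h
      exact ⟨R, Sb, h, Sb, h1, h2, subset_rfl⟩
    | none =>
      have hn := auxS_none 𝕋 T r wfr h
      by_contra hcon
      push_neg at hcon
      apply hn
      apply hex R hR
      rintro ⟨R', hR', Sb, hSb, hcomp⟩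
      exact hcon R' Sb hSb (compat_symm hcomp)
  -- the refined antichain
  set Sfam : {R : Set (List ℕ) // (Sf R).isSome} → Set (List ℕ) :=
    fun b => (Sf b.1).get b.2 with hSfam
  have hSfameq : ∀ b, Sf b.1 = some (Sfam b) := fun b => (Option.some_get b.2).symm
  have hmem' : ∀ b, Sfam b ∈ 𝕋 := fun b => (hspec _ _ (hSfameq b)).1
  have hsub' : ∀ b, ∃ a, Sfam b ⊆ T a := fun b => (hspec _ _ (hSfameq b)).2.2.1
  have hdisj' : ∀ b c, b ≠ c → branches (Sfam b) ∩ branches (Sfam c) = ∅ := by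
    intro b c hbc
    have hne : b.1 ≠ c.1 := fun h => hbc (Subtype.ext h)
    rcases trichotomous_of r b.1 c.1 with h | h | h
    · rw [Set.inter_comm]
      exact (hspec _ _ (hSfameq c)).2.2.2 b.1 h (Sfam b) (hSfameq b)
    · exact absurd h hne
    · exact (hspec _ _ (hSfameq b)).2.2.2 c.1 h (Sfam c) (hSfameq c)
  have hinc' : ∀ b c, b ≠ c → ¬ Compat 𝕋 (Sfam b) (Sfam c) :=
    fun b c hbc => incompat_of_disjoint hctf (hdisj' b c hbc)
  have hmaxS : ∀ R ∈ 𝕋, ∃ b, Compat 𝕋 R (Sfam b) := by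
    intro R hR
    obtain ⟨R', Sb, hSb, hcomp⟩ := hmax' R hR
    have hs : (Sf R').isSome := by rw [hSb]; rfl
    refine ⟨⟨R', hs⟩, ?_⟩
    have hget : Sfam ⟨R', hs⟩ = Sb := Option.some.inj ((Option.some_get hs).trans hSb)
    rwa [hget]
  have hcardκ : Cardinal.mk {R : Set (List ℕ) // (Sf R).isSome} = Cardinal.continuum := by
    apply le_antisymm
    · calc Cardinal.mk {R : Set (List ℕ) // (Sf R).isSome}
          ≤ Cardinal.mk (Set (List ℕ)) := Cardinal.mk_subtype_le _
      _ = Cardinal.continuum := hW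
    · rw [← hcard]
      choose f hf using fun a : ι => hmaxS (T a) (hmem a)
      apply Cardinal.mk_le_of_injective (f := f)
      intro a a' haa'
      obtain ⟨a0, ha0⟩ := hsub' (f a)
      have h1 : Compat 𝕋 (T a) (T a0) := by
        obtain ⟨P, hP, hPa, hPS⟩ := hf a
        exact ⟨P, hP, hPa, hPS.trans ha0⟩
      have h2 : Compat 𝕋 (T a') (T a0) := by
        obtain ⟨P, hP, hPa, hPS⟩ := hf a'
        have ha0' : Sfam (f a') ⊆ T a0 := by rw [← haa']; exact ha0
        exact ⟨P, hP, hPa, hPS.trans ha0'⟩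
      have e1 : a = a0 := by by_contra hne; exact hanti a a0 hne h1
      have e2 : a' = a0 := by by_contra hne; exact hanti a' a0 hne h2
      rw [e1, e2]
  exact ⟨⟨_, Sfam, hcardκ, hmem', hsub', hinc', hmaxS, hdisj'⟩,
    ⟨_, Sfam, hcardκ, hmem', hinc', hmaxS, hdisj'⟩⟩
end

section
/- Assume 𝔟 = 𝔠. Then Laver forcing has the incompatibility shrinking property: for every Laver tree T, every cardinal μ < 𝔠, and every family (S_α : α < μ) of Laver trees each incompatible with T, there is a Laver tree T' ⊆ T such that [T'] ∩ [S_α] = ∅ for all α < μ. -/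
/-- `T` is a Laver tree with stem `st`: `st ∈ T` is comparable with every node of `T`, and
every node extending `st` has infinitely many immediate successors in `T`. -/
def IsLaverWithStem (T : Set (List ℕ)) (st : List ℕ) : Prop :=
  IsSeqTree T ∧ st ∈ T ∧ (∀ t ∈ T, t <+: st ∨ st <+: t) ∧
    ∀ t ∈ T, st <+: t → {n : ℕ | t ++ [n] ∈ T}.Infinite

/-- A Laver tree. -/
def IsLaver (T : Set (List ℕ)) : Prop := ∃ st : List ℕ, IsLaverWithStem T st

/-- The bounding number `𝔟`: the least cardinality of a family `F ⊆ ω^ω` unbounded with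
respect to eventual domination `≤*`. -/
noncomputable def boundingNumber : Cardinal :=
  sInf {c : Cardinal | ∃ F : Set (ℕ → ℕ), Cardinal.mk F = c ∧
    ∀ f : ℕ → ℕ, ∃ g ∈ F, ¬ (∀ᶠ n in Filter.atTop, g n ≤ f n)}

/-! ### Auxiliary machinery: derivatives, kernel, rank -/

/-- The transfinite derivative of a set `P` of finite sequences: `t ∈ Dv P o` iff `t ∈ P` and
for all `o' < o`, `t` has infinitely many immediate successors in `Dv P o'`. -/
noncomputable def Dv (P : Set (List ℕ)) : Ordinal.{0} → Set (List ℕ) :=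
  fun o => {t | t ∈ P ∧ ∀ o' < o, {n : ℕ | t ++ [n] ∈ Dv P o'}.Infinite}
  termination_by o => o
  decreasing_by exact ‹_›

theorem Dv_def (P : Set (List ℕ)) (o : Ordinal) :
    Dv P o = {t | t ∈ P ∧ ∀ o' < o, {n : ℕ | t ++ [n] ∈ Dv P o'}.Infinite} := by
  rw [Dv]

theorem Dv_mono (P : Set (List ℕ)) {o o' : Ordinal} (h : o ≤ o') : Dv P o' ⊆ Dv P o := by
  intro t ht
  rw [Dv_def] at ht ⊢
  exact ⟨ht.1, fun o'' ho'' => ht.2 o'' (lt_of_lt_of_le ho'' h)⟩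

theorem Dv_subset (P : Set (List ℕ)) (o : Ordinal) : Dv P o ⊆ P := by
  intro t ht; rw [Dv_def] at ht; exact ht.1

/-- Kernel members split infinitely inside the kernel. -/
theorem kernel_infinite (P : Set (List ℕ)) (t : List ℕ) (ht : ∀ o, t ∈ Dv P o) :
    {n : ℕ | ∀ o, t ++ [n] ∈ Dv P o}.Infinite := by
  classical
  set w : ℕ → Ordinal.{0} := fun n =>
    if h : ∃ o, t ++ [n] ∉ Dv P o then h.choose else 0 with hw
  set σ : Ordinal.{0} := ⨆ n, w n with hσ
  have h1 := ht (σ + 1)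
  rw [Dv_def] at h1
  have h2 : {n : ℕ | t ++ [n] ∈ Dv P σ}.Infinite := h1.2 σ (Order.lt_succ σ)
  refine h2.mono ?_
  intro n hn
  intro o
  by_contra hmem
  have hex : ∃ o, t ++ [n] ∉ Dv P o := ⟨o, hmem⟩
  have : t ++ [n] ∉ Dv P (w n) := by
    rw [hw]; simp only [dif_pos hex]; exact hex.choose_spec
  exact this (Dv_mono P (le_trans (Ordinal.le_iSup w n) (le_refl σ)) hn)

theorem prefix_antisymm' {u t : List ℕ} (h1 : u <+: t) (h2 : t <+: u) : u = t :=
  h1.eq_of_length (le_antisymm h1.length_le h2.length_le)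

theorem prefix_concat' {u t : List ℕ} {n : ℕ} (h : u <+: t ++ [n]) : u <+: t ∨ u = t ++ [n] := by
  by_cases hl : u.length ≤ t.length
  · exact Or.inl (List.prefix_of_prefix_length_le h (List.prefix_append t [n]) hl)
  · right
    apply h.eq_of_length
    have := h.length_le
    simp only [List.length_append, List.length_cons, List.length_nil] at this ⊢
    omega

/-- If the kernel of `P` is nonempty, then `P` contains a Laver subtree. -/
theorem kernel_laver (P : Set (List ℕ)) (hP : ∀ s ∈ P, ∀ t : List ℕ, t <+: s → t ∈ P)
    (t₀ : List ℕ) (ht₀ : ∀ o, t₀ ∈ Dv P o) :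
    ∃ R : Set (List ℕ), IsLaver R ∧ R ⊆ P := by
  set K : Set (List ℕ) := {t | ∀ o, t ∈ Dv P o} with hK
  set R : Set (List ℕ) :=
    {s | s <+: t₀} ∪ {s | t₀ <+: s ∧ ∀ u, t₀ <+: u → u <+: s → u ∈ K} with hR
  have hKP : K ⊆ P := fun t ht => Dv_subset P 0 (ht 0)
  have hmemK : ∀ s ∈ R, t₀ <+: s → s ∈ K := by
    intro s hs hts
    rcases hs with hs | hs
    · have : s = t₀ := prefix_antisymm' hs hts
      subst this; exact ht₀
    · exact hs.2 s hts (List.prefix_refl s)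
  have hRsub : R ⊆ P := by
    intro s hs
    rcases hs with hs | hs
    · exact hP t₀ (hKP ht₀) s hs
    · exact hKP (hs.2 s hs.1 (List.prefix_refl s))
  refine ⟨R, ⟨t₀, ?_, ?_, ?_, ?_⟩, hRsub⟩
  · constructor
    · exact ⟨t₀, Or.inl (List.prefix_refl t₀)⟩
    · intro s hs u hu
      rcases hs with hs | hs
      · exact Or.inl (hu.trans hs)
      · rcases List.prefix_or_prefix_of_prefix hu hs.1 with h1 | h1
        · exact Or.inl h1
        · refine Or.inr ⟨h1, fun v hv1 hv2 => hs.2 v hv1 (hv2.trans hu)⟩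
  · exact Or.inl (List.prefix_refl t₀)
  · intro s hs
    rcases hs with hs | hs
    · exact Or.inl hs
    · exact Or.inr hs.1
  · intro s hs hts
    have hsK : s ∈ K := hmemK s hs hts
    have hinf := kernel_infinite P s hsK
    refine hinf.mono ?_
    intro n hn
    right
    refine ⟨hts.trans (List.prefix_append s [n]), ?_⟩
    intro u hu1 hu2
    rcases prefix_concat' hu2 with h1 | h1
    · rcases hs with hs' | hs'
      · have hst : s = t₀ := prefix_antisymm' hs' hts
        have : u = t₀ := prefix_antisymm' (hst ▸ h1) hu1
        subst this; exact ht₀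
      · exact hs'.2 u hu1 h1
    · subst h1; exact hn

/-- The rank of a node: the least stage at which it falls out of the derivative hierarchy. -/
noncomputable def rho (P : Set (List ℕ)) (t : List ℕ) : Ordinal.{0} := sInf {o | t ∉ Dv P o}

theorem rho_descent (P : Set (List ℕ))
    (hno : ∀ t : List ℕ, ¬ ∀ o, t ∈ Dv P o) :
    ∀ t ∈ P, ∃ N : ℕ, ∀ n ≥ N, t ++ [n] ∈ P → rho P (t ++ [n]) < rho P t := by
  intro t htP
  have hA : {o : Ordinal.{0} | t ∉ Dv P o}.Nonempty := by
    rcases not_forall.mp (hno t) with ⟨o, ho⟩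
    exact ⟨o, ho⟩
  have hmem : t ∉ Dv P (rho P t) := csInf_mem hA
  rw [Dv_def] at hmem
  simp only [Set.mem_setOf_eq] at hmem
  push_neg at hmem
  rcases hmem htP with ⟨β, hβ, hFin⟩
  rcases hFin.bddAbove with ⟨N, hN⟩
  refine ⟨N + 1, fun n hn hnP => ?_⟩
  have hnmem : t ++ [n] ∉ Dv P β := by
    intro hc
    exact absurd (hN hc) (by omega)
  calc rho P (t ++ [n]) ≤ β := csInf_le' hnmem
    _ < rho P t := hβ

theorem no_ordinal_descent (f : ℕ → Ordinal.{0}) (hf : ∀ n, f (n + 1) < f n) : False := by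
  have key : ∀ (o : Ordinal.{0}) (g : ℕ → Ordinal.{0}), g 0 = o → (∀ n, g (n+1) < g n) → False := by
    intro o
    induction o using Ordinal.induction with
    | h o IH =>
      intro g h0 h
      exact IH (g 1) (h0 ▸ h 0) (fun n => g (n+1)) rfl (fun n => h (n+1))
  exact key (f 0) f rfl hf

theorem seqRestrict_succ (x : ℕ → ℕ) (n : ℕ) :
    seqRestrict x (n + 1) = seqRestrict x n ++ [x n] := by
  rw [seqRestrict, seqRestrict, List.ofFn_succ']
  simp

theorem seqRestrict_length (x : ℕ → ℕ) (n : ℕ) : (seqRestrict x n).length = n :=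
  List.length_ofFn

theorem branch_contra (P : Set (List ℕ))
    (B : List ℕ → ℕ)
    (hB : ∀ t ∈ P, ∀ n ≥ B t, t ++ [n] ∈ P → rho P (t ++ [n]) < rho P t)
    (x : ℕ → ℕ) (hx : ∀ n, seqRestrict x n ∈ P)
    (hdom : ∀ᶠ n in Filter.atTop, B (seqRestrict x n) ≤ x n) : False := by
  rcases Filter.eventually_atTop.mp hdom with ⟨N, hN⟩
  apply no_ordinal_descent (fun k => rho P (seqRestrict x (N + k)))
  intro k
  have h1 : seqRestrict x (N + k) ++ [x (N + k)] = seqRestrict x (N + (k + 1)) :=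
    (seqRestrict_succ x (N + k)).symm
  have := hB (seqRestrict x (N + k)) (hx (N + k)) (x (N + k)) (hN (N + k) (by omega))
    (h1 ▸ hx (N + (k + 1)))
  rwa [h1] at this

/-- Families of size less than `𝔟` are dominated. -/
theorem exists_dominating (hb : boundingNumber = Cardinal.continuum)
    (ι : Type) (hcard : Cardinal.mk ι < Cardinal.continuum) (g : ι → ℕ → ℕ) :
    ∃ f : ℕ → ℕ, ∀ a : ι, ∀ᶠ n in Filter.atTop, g a n ≤ f n := by
  by_contra h
  push_neg at h
  have hmem : Cardinal.mk (Set.range g) ∈ {c : Cardinal | ∃ F : Set (ℕ → ℕ),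
      Cardinal.mk F = c ∧ ∀ f : ℕ → ℕ, ∃ g' ∈ F, ¬ (∀ᶠ n in Filter.atTop, g' n ≤ f n)} := by
    refine ⟨Set.range g, rfl, fun f => ?_⟩
    obtain ⟨a, ha⟩ := h f
    exact ⟨g a, ⟨a, rfl⟩, Filter.not_eventually.mpr (ha.mono fun n hn => not_le.mpr hn)⟩
  have h1 : boundingNumber ≤ Cardinal.mk (Set.range g) := csInf_le' hmem
  have h2 : Cardinal.mk (Set.range g) ≤ Cardinal.mk ι := Cardinal.mk_range_le
  rw [hb] at h1
  exact absurd (h1.trans h2) (not_le.mpr hcard)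

/-- Assuming `𝔟 = 𝔠`, Laver forcing has the incompatibility shrinking property: for every
Laver tree `T` and every family of fewer than continuum many Laver trees each incompatible
with `T`, there is a Laver tree `T' ⊆ T` whose branch set avoids all their branch sets. -/
theorem laver_incompatShrinking_of_b_eq_c (hb : boundingNumber = Cardinal.continuum)
    (T : Set (List ℕ)) (hT : IsLaver T)
    (ι : Type) (hcard : Cardinal.mk ι < Cardinal.continuum)
    (S : ι → Set (List ℕ)) (hS : ∀ a : ι, IsLaver (S a))
    (hincompat : ∀ a : ι, ¬ ∃ R : Set (List ℕ), IsLaver R ∧ R ⊆ T ∧ R ⊆ S a) :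
    ∃ T' : Set (List ℕ), IsLaver T' ∧ T' ⊆ T ∧
      ∀ a : ι, branches T' ∩ branches (S a) = ∅ := by
  classical
  obtain ⟨st, hTtree, hstT, hstcomp, hstsplit⟩ := hT
  -- the intersection trees
  set P : ι → Set (List ℕ) := fun a => T ∩ S a with hP
  have hPclosed : ∀ a, ∀ s ∈ P a, ∀ t : List ℕ, t <+: s → t ∈ P a := by
    intro a s hs t ht
    exact ⟨hTtree.2 s hs.1 t ht, ((hS a).choose_spec).1.2 s hs.2 t ht⟩
  -- empty kernels
  have hno : ∀ a, ∀ t : List ℕ, ¬ ∀ o, t ∈ Dv (P a) o := by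
    intro a t ht
    obtain ⟨R, hR, hRsub⟩ := kernel_laver (P a) (hPclosed a) t ht
    exact hincompat a ⟨R, hR, fun s hs => (hRsub hs).1, fun s hs => (hRsub hs).2⟩
  -- bound functions
  have hBex : ∀ a, ∃ B : List ℕ → ℕ,
      ∀ t ∈ P a, ∀ n ≥ B t, t ++ [n] ∈ P a → rho (P a) (t ++ [n]) < rho (P a) t := by
    intro a
    choose! B hB using rho_descent (P a) (hno a)
    exact ⟨B, hB⟩
  choose B hB using hBex
  -- dominating function
  set g : ι → ℕ → ℕ := fun a k => B a (Denumerable.ofNat (List ℕ) k) with hg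
  obtain ⟨f, hf⟩ := exists_dominating hb ι hcard g
  -- the pruned tree
  set T' : Set (List ℕ) := {t | t ∈ T ∧ ∀ i : ℕ, st.length ≤ i → i < t.length →
    f (Encodable.encode (t.take i)) ≤ t.getD i 0} with hT'
  have hT'sub : T' ⊆ T := fun t ht => ht.1
  have hstT' : st ∈ T' := by
    refine ⟨hstT, fun i h1 h2 => absurd (lt_of_le_of_lt h1 h2) (lt_irrefl _)⟩
  have hT'closed : ∀ s ∈ T', ∀ t : List ℕ, t <+: s → t ∈ T' := by
    intro s hs t ht
    refine ⟨hTtree.2 s hs.1 t ht, fun i h1 h2 => ?_⟩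
    obtain ⟨r, rfl⟩ := ht
    have h4 : i < (t ++ r).length := lt_of_lt_of_le h2 (by simp)
    have h5 := hs.2 i h1 h4
    rwa [List.take_append_of_le_length (le_of_lt h2), List.getD_append t r 0 i h2] at h5
  have hT'split : ∀ t ∈ T', st <+: t → {n : ℕ | t ++ [n] ∈ T'}.Infinite := by
    intro t ht hstt
    have hsub : {n : ℕ | t ++ [n] ∈ T} \ {n : ℕ | n < f (Encodable.encode t)}
        ⊆ {n : ℕ | t ++ [n] ∈ T'} := by
      intro n hn
      refine ⟨hn.1, fun i h1 h2 => ?_⟩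
      simp only [List.length_append, List.length_cons, List.length_nil] at h2
      rcases lt_or_ge i t.length with h3 | h3
      · rw [List.take_append_of_le_length (le_of_lt h3), List.getD_append t [n] 0 i h3]
        exact ht.2 i h1 h3
      · have hieq : i = t.length := by omega
        subst hieq
        rw [List.take_left, List.getD_append_right t [n] 0 t.length (le_refl _)]
        simpa using not_lt.mp hn.2
    exact ((hstsplit t ht.1 hstt).diff (Set.finite_Iio _)).mono hsub
  refine ⟨T', ⟨st, ⟨⟨st, hstT'⟩, hT'closed⟩, hstT', fun t ht => hstcomp t ht.1, hT'split⟩,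
    hT'sub, ?_⟩
  -- branch disjointness
  intro a
  rw [Set.eq_empty_iff_forall_notMem]
  rintro x ⟨hx1, hx2⟩
  have hxP : ∀ n, seqRestrict x n ∈ P a := fun n => ⟨hT'sub (hx1 n), hx2 n⟩
  refine branch_contra (P a) (B a) (hB a) x hxP ?_
  -- eventual domination along the branch
  obtain ⟨N₁, hN₁⟩ := Filter.eventually_atTop.mp (hf a)
  have hfin : {n : ℕ | Encodable.encode (seqRestrict x n) < N₁}.Finite := by
    have hinj : Set.InjOn (fun n => Encodable.encode (seqRestrict x n))
        {n : ℕ | Encodable.encode (seqRestrict x n) < N₁} := by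
      intro m _ n _ h
      have := Encodable.encode_injective h
      have h2 := congrArg List.length this
      rwa [seqRestrict_length, seqRestrict_length] at h2
    exact Set.Finite.of_finite_image (Set.Finite.subset (Set.finite_Iio N₁)
      (by rintro k ⟨n, hn, rfl⟩; exact hn)) hinj
  obtain ⟨M, hM⟩ := hfin.bddAbove
  rw [Filter.eventually_atTop]
  refine ⟨max (M + 1) st.length, fun n hn => ?_⟩
  have hnst : st.length ≤ n := le_trans (le_max_right _ _) hn
  have hnM : M + 1 ≤ n := le_trans (le_max_left _ _) hn
  have hcode : N₁ ≤ Encodable.encode (seqRestrict x n) := by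
    by_contra hc
    exact absurd (hM (not_le.mp hc)) (by omega)
  -- membership of the next restriction in T' gives the pruning inequality
  have hmem := (hx1 (n + 1)).2 n hnst (by rw [seqRestrict_length]; omega)
  rw [seqRestrict_succ] at hmem
  have htake : (seqRestrict x n ++ [x n]).take n = seqRestrict x n := by
    have h6 := List.take_left (l₁ := seqRestrict x n) (l₂ := [x n])
    rwa [seqRestrict_length] at h6
  have hgetD : (seqRestrict x n ++ [x n]).getD n 0 = x n := by
    rw [List.getD_append_right _ [x n] 0 n (le_of_eq (seqRestrict_length x n))]
    simp [seqRestrict_length]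
  rw [htake, hgetD] at hmem
  have hgf := hN₁ (Encodable.encode (seqRestrict x n)) hcode
  rw [hg] at hgf
  simp only [Denumerable.ofNat_encode] at hgf
  exact le_trans hgf hmem
end
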